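/- Let β = (β_0, 2, 2, ...) with β_L = 2 for all L ≥ 1, and m ≥ 1. Then for every nonzero G ∈ ℕ^m with ord_β(Σ_i g^i) > min_i ord_β(g^i), there exists X ∈ ℕ^m with σ_β(X + G) = σ_β(X). Consequently the maximum Sprague-Grundy system {C ≠ 0 : ∀X, σ_β(X+C) ≠ σ_β(X)} equals 𝒞_β = {C ≠ 0 : ord_β(Σ c^i) = min_i ord_β(c^i)}. -/

import Mathlib

open scoped BigOperators

/-- β̂_L = β_0 ⋯ β_{L-1}, the place value of digit L in mixed base β. -/
def bhat (β : ℕ → ℕ) (L : ℕ) : ℕ := ∏ i ∈ Finset.range L, β i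

/-- The L-th digit of n in the mixed base β. -/
def mdigit (β : ℕ → ℕ) (n L : ℕ) : ℕ := n / bhat β L % β L

/-- Digit-wise addition modulo β_L in mixed base β. -/
def moplus (β : ℕ → ℕ) (n h : ℕ) : ℕ :=
  ∑ L ∈ Finset.range (n + h + 1), ((mdigit β n L + mdigit β h L) % β L) * bhat β L

/-- Digit-wise subtraction modulo β_L in mixed base β. -/
def mominus (β : ℕ → ℕ) (n h : ℕ) : ℕ :=
  ∑ L ∈ Finset.range (n + h + 1), ((β L + mdigit β n L - mdigit β h L) % β L) * bhat β L

/-- σ_β(X) = x^0 ⊕ ⋯ ⊕ x^{m-1}: the digit-wise Nim sum in mixed base β. -/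
def msigma (β : ℕ → ℕ) {m : ℕ} (X : Fin m → ℕ) : ℕ :=
  ∑ L ∈ Finset.range (∑ i, X i + 1), ((∑ i, mdigit β (X i) L) % β L) * bhat β L

/-- Hamming weight: number of nonzero components. -/
def hamwt {m : ℕ} (C : Fin m → ℕ) : ℕ := (Finset.univ.filter (fun i => C i ≠ 0)).card

/-- ord_β(n): the largest L with β̂_L ∣ n (⊤ for n = 0). -/
def mord (β : ℕ → ℕ) (n : ℕ) : ℕ∞ :=
  if n = 0 then ⊤ else (Nat.findGreatest (fun L => bhat β L ∣ n) n : ℕ∞)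

/-- 𝒞 is a Sprague-Grundy system of σ_β: its members are nonzero moves and
σ_β satisfies the mex recursion of the take-away game Γ(ℕ^m, 𝒞), i.e. σ_β is the
Sprague-Grundy function of that game. -/
def IsSGSystem (β : ℕ → ℕ) {m : ℕ} (𝒞 : Set (Fin m → ℕ)) : Prop :=
  (∀ C ∈ 𝒞, C ≠ 0) ∧
  ∀ X : Fin m → ℕ, msigma β X =
    sInf {n : ℕ | ∀ C ∈ 𝒞, (∀ i, C i ≤ X i) → msigma β (fun i => X i - C i) ≠ n}



/-- Binary nim-sum (XOR fold) of a vector of naturals. -/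
def nsum : {m : ℕ} → (Fin m → ℕ) → ℕ
  | 0, _ => 0
  | _+1, X => X 0 ^^^ nsum (fun i => X i.succ)

@[simp] lemma nsum_zero (X : Fin 0 → ℕ) : nsum X = 0 := rfl

lemma nsum_succ {m : ℕ} (X : Fin (m+1) → ℕ) :
    nsum X = X 0 ^^^ nsum (fun i => X i.succ) := rfl

lemma xor_bit (x y L : ℕ) :
    (x ^^^ y) / 2^L % 2 = (x / 2^L % 2 + y / 2^L % 2) % 2 := by
  have h := Nat.testBit_xor x y L
  rw [Nat.testBit_eq_decide_div_mod_eq, Nat.testBit_eq_decide_div_mod_eq, Nat.testBit_eq_decide_div_mod_eq] at h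
  rcases Nat.mod_two_eq_zero_or_one (x / 2^L) with hx | hx <;>
    rcases Nat.mod_two_eq_zero_or_one (y / 2^L) with hy | hy <;>
      rcases Nat.mod_two_eq_zero_or_one ((x ^^^ y) / 2^L) with hz | hz <;>
        simp [hx, hy, hz] at h ⊢ <;> omega

/-- bit L of the nim-sum is the mod-2 sum of bits. -/
lemma nsum_bit : ∀ {m : ℕ} (X : Fin m → ℕ) (L : ℕ),
    nsum X / 2^L % 2 = (∑ i, X i / 2^L % 2) % 2
  | 0, X, L => by simp [Nat.zero_div]
  | m+1, X, L => by
    rw [nsum_succ, xor_bit, nsum_bit (fun i => X i.succ) L, Fin.sum_univ_succ]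
    omega

lemma nsum_lt_two_pow : ∀ {m : ℕ} (X : Fin m → ℕ) (N : ℕ),
    (∀ i, X i < 2^N) → nsum X < 2^N
  | 0, X, N, h => by simpa [nsum] using Nat.pos_pow_of_pos N (by norm_num)
  | m+1, X, N, h => by
    rw [nsum_succ]
    exact Nat.xor_lt_two_pow (h 0) (nsum_lt_two_pow _ N (fun i => h i.succ))

lemma xor_two_pow_mul (k x y : ℕ) : (2^k * x) ^^^ (2^k * y) = 2^k * (x ^^^ y) := by
  apply Nat.eq_of_testBit_eq
  intro n
  have e : ∀ z : ℕ, 2^k * z = z <<< k := by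
    intro z; rw [Nat.shiftLeft_eq, mul_comm]
  rw [Nat.testBit_xor, e, e, e, Nat.testBit_shiftLeft, Nat.testBit_shiftLeft,
    Nat.testBit_shiftLeft, Nat.testBit_xor]
  cases decide (n ≥ k) <;> simp

lemma nsum_two_pow_mul : ∀ {m : ℕ} (X : Fin m → ℕ) (k : ℕ),
    nsum (fun i => 2^k * X i) = 2^k * nsum X
  | 0, X, k => by simp
  | m+1, X, k => by
    rw [nsum_succ, nsum_succ, nsum_two_pow_mul (fun i => X i.succ) k, xor_two_pow_mul]

lemma xor_two_mul_add (a b e f : ℕ) (he : e ≤ 1) (hf : f ≤ 1) :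
    (2*a + e) ^^^ (2*b + f) = 2*(a ^^^ b) + (e + f) % 2 := by
  apply Nat.eq_of_testBit_eq
  intro n
  rw [Nat.testBit_xor]
  cases n with
  | zero =>
    rw [Nat.testBit_eq_decide_div_mod_eq, Nat.testBit_eq_decide_div_mod_eq, Nat.testBit_eq_decide_div_mod_eq]
    interval_cases e <;> interval_cases f <;> simp [Nat.add_mul_mod_self_left, Nat.mul_add_mod]
  | succ n =>
    rw [Nat.testBit_eq_decide_div_mod_eq, Nat.testBit_eq_decide_div_mod_eq, Nat.testBit_eq_decide_div_mod_eq,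
      pow_succ', ← Nat.div_div_eq_div_mul, ← Nat.div_div_eq_div_mul, ← Nat.div_div_eq_div_mul]
    have h1 : (2*a + e) / 2 = a := by omega
    have h2 : (2*b + f) / 2 = b := by omega
    have h3 : (2*(a ^^^ b) + (e + f) % 2) / 2 = a ^^^ b := by omega
    rw [h1, h2, h3, ← Nat.testBit_eq_decide_div_mod_eq, ← Nat.testBit_eq_decide_div_mod_eq,
      ← Nat.testBit_eq_decide_div_mod_eq, Nat.testBit_xor]

lemma nsum_two_mul_add : ∀ {m : ℕ} (z ε : Fin m → ℕ), (∀ i, ε i ≤ 1) →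
    nsum (fun i => 2 * z i + ε i) = 2 * nsum z + (∑ i, ε i) % 2
  | 0, z, ε, h => by simp [nsum]
  | m+1, z, ε, h => by
    rw [nsum_succ]
    show (2 * z 0 + ε 0) ^^^ nsum (fun i => 2 * z i.succ + ε i.succ) = _
    rw [nsum_two_mul_add (fun i => z i.succ) (fun i => ε i.succ) (fun i => h i.succ),
      xor_two_mul_add _ _ _ _ (h 0) (by omega),
      nsum_succ z, Fin.sum_univ_succ]
    omega

lemma sum_bits (z : ℕ) : ∀ N : ℕ, ∑ L ∈ Finset.range N, (z / 2^L % 2) * 2^L = z % 2^N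
  | 0 => by simp [Nat.mod_one]
  | N+1 => by
    rw [Finset.sum_range_succ, sum_bits z N, pow_succ, Nat.mod_mul]
    ring

lemma pick_s {m : ℕ} (g : Fin m → ℕ) (T : Finset (Fin m)) (hT : 2 ≤ T.card) :
    ∃ s : Fin m → ℕ, (∀ i, s i ≤ 1) ∧ (∀ i, s i = 1 → i ∈ T) ∧
      2 ∣ ∑ i, (g i + s i) ∧
      ((∀ i, g i + s i = 0) ∨ ∃ i, (g i + s i) % 2 = 1) ∧
      (∑ i, s i ≤ 2) ∧ (∑ i, s i = 2 → 2 ≤ ∑ i, g i) := by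
  classical
  by_cases hodd : ∃ i, g i % 2 = 1
  · obtain ⟨i₀, hi₀⟩ := hodd
    by_cases hpar : 2 ∣ ∑ i, g i
    · refine ⟨fun _ => 0, fun i => Nat.zero_le 1, fun i h => absurd h (by simp),
        by simpa using hpar, Or.inr ⟨i₀, by simpa using hi₀⟩, by simp, by simp⟩
    · obtain ⟨a, ha, b, hb, hab⟩ := Finset.one_lt_card.mp hT
      set j₀ := if a = i₀ then b else a with hj₀def
      have hj₀T : j₀ ∈ T := by rw [hj₀def]; split <;> assumption
      have hj₀ : j₀ ≠ i₀ := by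
        rw [hj₀def]; split
        · rename_i hh; rw [← hh]; exact (Ne.symm hab)
        · assumption
      set s : Fin m → ℕ := fun i => if i = j₀ then 1 else 0 with hsdef
      have hs1 : ∀ i, s i ≤ 1 := by intro i; rw [hsdef]; dsimp only; split <;> omega
      have hssum : ∑ i, s i = 1 := by
        rw [hsdef]; rw [Finset.sum_ite_eq' Finset.univ j₀ (fun _ => 1)]; simp
      have hsi₀ : s i₀ = 0 := by rw [hsdef]; dsimp only; rw [if_neg (Ne.symm hj₀)]
      refine ⟨s, hs1, ?_, ?_, Or.inr ⟨i₀, by rw [hsi₀]; simpa using hi₀⟩, by omega, by omega⟩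
      · intro i hi
        rw [hsdef] at hi; dsimp only at hi
        by_cases h : i = j₀
        · rwa [h]
        · rw [if_neg h] at hi; exact absurd hi (by norm_num)
      · rw [Finset.sum_add_distrib, hssum]; omega
  · push_neg at hodd
    have hall : ∀ i, g i % 2 = 0 := fun i => by have := hodd i; omega
    by_cases hg0 : ∀ i, g i = 0
    · exact ⟨fun _ => 0, fun i => Nat.zero_le 1, fun i h => absurd h (by simp),
        by simp [hg0], Or.inl (fun i => by simp [hg0]), by simp, by simp⟩
    · push_neg at hg0
      obtain ⟨i₁, hi₁⟩ := hg0
      obtain ⟨a, ha, b, hb, hab⟩ := Finset.one_lt_card.mp hT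
      set s : Fin m → ℕ := fun i => (if i = a then 1 else 0) + (if i = b then 1 else 0)
        with hsdef
      have hs1 : ∀ i, s i ≤ 1 := by
        intro i; rw [hsdef]; dsimp only
        by_cases h1 : i = a
        · rw [if_pos h1, if_neg (h1 ▸ hab)]
        · rw [if_neg h1]; split <;> omega
      have hssum : ∑ i, s i = 2 := by
        rw [hsdef, Finset.sum_add_distrib, Finset.sum_ite_eq' Finset.univ a (fun _ => 1),
          Finset.sum_ite_eq' Finset.univ b (fun _ => 1)]
        simp
      have hsa : s a = 1 := by rw [hsdef]; dsimp only; rw [if_pos rfl, if_neg hab]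
      refine ⟨s, hs1, ?_, ?_, Or.inr ⟨a, by rw [hsa]; have := hall a; omega⟩, by omega, ?_⟩
      · intro i hi
        rw [hsdef] at hi; dsimp only at hi
        by_cases h1 : i = a
        · rwa [h1]
        · by_cases h2 : i = b
          · rwa [h2]
          · rw [if_neg h1, if_neg h2] at hi; exact absurd hi (by norm_num)
      · rw [Finset.sum_add_distrib, hssum]
        have : 2 ∣ ∑ i, g i := Finset.dvd_sum (fun i _ => by have := hall i; omega)
        omega
      · intro _
        have h2 : 2 ≤ g i₁ := by have := hall i₁; omega
        exact h2.trans (Finset.single_le_sum (fun i _ => Nat.zero_le _) (Finset.mem_univ i₁))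

lemma core : ∀ (N : ℕ) {m : ℕ} (h : Fin m → ℕ), (∑ i, h i) ≤ N →
    ((∀ i, h i = 0) ∨ (2 ∣ ∑ i, h i ∧ ∃ i, h i % 2 = 1)) →
    ∃ u : Fin m → ℕ, nsum (fun i => u i + h i) = nsum u := by
  intro N
  induction N with
  | zero =>
    intro m h hle hinv
    have h0 : ∀ i, h i = 0 := by
      intro i
      have := Finset.single_le_sum (f := h) (fun i _ => Nat.zero_le _) (Finset.mem_univ i)
      omega
    exact ⟨fun _ => 0, by simp [h0]⟩
  | succ N ih =>
    intro m h hle hinv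
    classical
    rcases hinv with h0 | ⟨hpar, i₀, hi₀⟩
    · exact ⟨fun _ => 0, by simp [h0]⟩
    · set O := Finset.univ.filter (fun i => h i % 2 = 1) with hOdef
      have hsum_parity : ∑ i, h i % 2 = O.card := by
        have e : ∑ i, h i % 2 = ∑ i, if h i % 2 = 1 then 1 else 0 :=
          Finset.sum_congr rfl (fun i _ => by
            rcases Nat.mod_two_eq_zero_or_one (h i) with h2 | h2 <;> simp [h2])
        rw [hOdef, e]
        simpa using Finset.sum_boole (fun i => h i % 2 = 1) Finset.univ
      have hmem : i₀ ∈ O := Finset.mem_filter.mpr ⟨Finset.mem_univ _, hi₀⟩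
      have hO1 : 1 ≤ O.card := Finset.card_pos.mpr ⟨i₀, hmem⟩
      have e1 : ∑ i, h i = 2 * (∑ i, h i / 2) + ∑ i, h i % 2 := by
        rw [Finset.mul_sum, ← Finset.sum_add_distrib]
        exact Finset.sum_congr rfl (fun i _ => by omega)
      have hOcard : 2 ≤ O.card := by
        obtain ⟨t, ht⟩ := hpar
        omega
      obtain ⟨s, hs1, hsT, hspar, hsodd, hs2, hs2'⟩ := pick_s (fun i => h i / 2) O hOcard
      have hsodd' : ∀ i, s i = 1 → h i % 2 = 1 := fun i hi => by
        have := hsT i hi; rw [hOdef] at this; exact (Finset.mem_filter.mp this).2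
      have e2 : ∑ i, (h i / 2 + s i) = (∑ i, h i / 2) + ∑ i, s i :=
        Finset.sum_add_distrib
      have hle' : ∑ i, (h i / 2 + s i) ≤ N := by
        by_cases hs22 : ∑ i, s i = 2
        · have := hs2' hs22; omega
        · omega
      obtain ⟨w, hw⟩ := ih (fun i => h i / 2 + s i) hle' (by
        rcases hsodd with hL | hR
        · exact Or.inl hL
        · exact Or.inr ⟨hspar, hR⟩)
      refine ⟨fun i => 2 * w i + s i, ?_⟩
      have key : ∀ i, (2 * w i + s i) + h i
          = 2 * (w i + (h i / 2 + s i)) + (if s i = 1 then 0 else h i % 2) := by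
        intro i
        have hA := hs1 i
        by_cases hsi : s i = 1
        · have := hsodd' i hsi; rw [if_pos hsi]; omega
        · rw [if_neg hsi]; omega
      have hparity : (∑ i, if s i = 1 then 0 else h i % 2) % 2 = (∑ i, s i) % 2 := by
        have hbs : ∑ i, ((if s i = 1 then 0 else h i % 2) + s i) = ∑ i, h i % 2 :=
          Finset.sum_congr rfl (fun i _ => by
            have hA := hs1 i
            by_cases hsi : s i = 1
            · have := hsodd' i hsi; rw [if_pos hsi]; omega
            · rw [if_neg hsi]; omega)
        rw [Finset.sum_add_distrib] at hbs
        obtain ⟨t, ht⟩ := hpar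
        omega
      calc nsum (fun i => (2 * w i + s i) + h i)
          = nsum (fun i => 2 * (w i + (h i / 2 + s i)) + (if s i = 1 then 0 else h i % 2)) := by
            congr 1; funext i; exact key i
        _ = 2 * nsum (fun i => w i + (h i / 2 + s i))
            + (∑ i, if s i = 1 then 0 else h i % 2) % 2 :=
            nsum_two_mul_add _ _ (fun i => by split <;> omega)
        _ = 2 * nsum w + (∑ i, s i) % 2 := by rw [hw, hparity]
        _ = nsum (fun i => 2 * w i + s i) := (nsum_two_mul_add w s hs1).symm

lemma bhat_zero (β : ℕ → ℕ) : bhat β 0 = 1 := Finset.prod_range_zero β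

lemma bhat_succ (β : ℕ → ℕ) (L : ℕ) : bhat β (L+1) = bhat β L * β L :=
  Finset.prod_range_succ β L

section AuxSG
variable {β : ℕ → ℕ} (hβ0 : 2 ≤ β 0) (hβ : ∀ L, 1 ≤ L → β L = 2)
include hβ0 hβ

lemma bhat_eq (L : ℕ) : bhat β (L+1) = β 0 * 2^L := by
  induction L with
  | zero => simp [bhat_succ, bhat_zero]
  | succ L ihL => rw [bhat_succ, ihL, hβ (L+1) (by omega), pow_succ]; ring

lemma two_pow_le_bhat (L : ℕ) : 2^L ≤ bhat β L := by
  cases L with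
  | zero => simp [bhat_zero]
  | succ L =>
    rw [bhat_eq hβ0 hβ L, pow_succ']
    exact Nat.mul_le_mul_right _ hβ0

lemma bhat_dvd {L M : ℕ} (h : L ≤ M) : bhat β L ∣ bhat β M :=
  Finset.prod_dvd_prod_of_subset _ _ β (Finset.range_subset_range.mpr h)

lemma bhat_pos (L : ℕ) : 0 < bhat β L :=
  lt_of_lt_of_le (Nat.two_pow_pos L) (two_pow_le_bhat hβ0 hβ L)

/-- characterization of mord via divisibility -/
lemma mord_ge_iff (n L : ℕ) : (L : ℕ∞) ≤ mord β n ↔ bhat β L ∣ n := by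
  unfold mord
  by_cases hn : n = 0
  · simp [hn]
  · rw [if_neg hn, Nat.cast_le]
    constructor
    · intro hle
      have hP : bhat β (Nat.findGreatest (fun L => bhat β L ∣ n) n) ∣ n :=
        Nat.findGreatest_spec (P := fun L => bhat β L ∣ n) (Nat.zero_le n) (by simp [bhat_zero])
      exact dvd_trans (bhat_dvd hβ0 hβ hle) hP
    · intro hdvd
      apply Nat.le_findGreatest (P := fun L => bhat β L ∣ n) _ hdvd
      by_contra hLn
      push_neg at hLn
      have h1 : bhat β L ≤ n := Nat.le_of_dvd (Nat.pos_of_ne_zero hn) hdvd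
      have h2 : 2^L ≤ bhat β L := two_pow_le_bhat hβ0 hβ L
      have h3 : L < 2^L := Nat.lt_two_pow_self
      omega

/-- closed form of msigma for β = (β₀, 2, 2, ...) -/
lemma msigma_eq {m : ℕ} (X : Fin m → ℕ) :
    msigma β X = (∑ i, X i) % β 0 + β 0 * nsum (fun i => X i / β 0) := by
  unfold msigma
  rw [Finset.sum_range_succ']
  have h0 : ((∑ i, mdigit β (X i) 0) % β 0) * bhat β 0 = (∑ i, X i) % β 0 := by
    have hd : ∀ i, mdigit β (X i) 0 = X i % β 0 := fun i => by
      unfold mdigit; rw [bhat_zero, Nat.div_one]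
    rw [bhat_zero, mul_one, Finset.sum_congr rfl (fun i _ => hd i)]
    exact (Finset.sum_nat_mod Finset.univ (β 0) X).symm
  have h1 : ∀ L, ((∑ i, mdigit β (X i) (L+1)) % β (L+1)) * bhat β (L+1)
      = β 0 * ((nsum (fun i => X i / β 0) / 2^L % 2) * 2^L) := by
    intro L
    have hb2 : β (L+1) = 2 := hβ _ (by omega)
    have hd : ∀ i, mdigit β (X i) (L+1) = (X i / β 0) / 2^L % 2 := fun i => by
      unfold mdigit; rw [bhat_eq hβ0 hβ L, hb2, Nat.div_div_eq_div_mul]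
    rw [hb2, bhat_eq hβ0 hβ L, Finset.sum_congr rfl (fun i _ => hd i),
      ← nsum_bit (fun i => X i / β 0) L]
    ring
  rw [Finset.sum_congr rfl (fun L _ => h1 L), ← Finset.mul_sum, h0,
    sum_bits (nsum (fun i => X i / β 0)) (∑ i, X i)]
  have hlt : nsum (fun i => X i / β 0) < 2^(∑ i, X i) :=
    nsum_lt_two_pow _ _ (fun i =>
      lt_of_le_of_lt
        (le_trans (Nat.div_le_self _ _)
          (Finset.single_le_sum (fun i _ => Nat.zero_le _) (Finset.mem_univ i)))
        Nat.lt_two_pow_self)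
  rw [Nat.mod_eq_of_lt hlt, add_comm]

lemma sigma_iff {m : ℕ} (X C : Fin m → ℕ) :
    msigma β (fun i => X i + C i) = msigma β X ↔
      ((∑ i, X i + ∑ i, C i) % β 0 = (∑ i, X i) % β 0 ∧
       nsum (fun i => (X i + C i) / β 0) = nsum (fun i => X i / β 0)) := by
  rw [msigma_eq hβ0 hβ, msigma_eq hβ0 hβ, Finset.sum_add_distrib]
  constructor
  · intro hEq
    have ha : (∑ i, X i + ∑ i, C i) % β 0 < β 0 := Nat.mod_lt _ (by omega)
    have hb : (∑ i, X i) % β 0 < β 0 := Nat.mod_lt _ (by omega)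
    have hab : (∑ i, X i + ∑ i, C i) % β 0 = (∑ i, X i) % β 0 := by
      have e1 : ((∑ i, X i + ∑ i, C i) % β 0 + β 0 * nsum (fun i => (X i + C i) / β 0)) % β 0
          = (∑ i, X i + ∑ i, C i) % β 0 := by
        rw [Nat.add_mul_mod_self_left]
        exact Nat.mod_mod_of_dvd _ dvd_rfl
      have e2 : (((∑ i, X i) % β 0) + β 0 * nsum (fun i => X i / β 0)) % β 0
          = (∑ i, X i) % β 0 := by
        rw [Nat.add_mul_mod_self_left]
        exact Nat.mod_eq_of_lt hb
      rw [← e1, hEq, e2]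
    refine ⟨hab, ?_⟩
    rw [hab] at hEq
    have := Nat.add_left_cancel hEq
    exact Nat.eq_of_mul_eq_mul_left (by omega) this
  · rintro ⟨h1, h2⟩
    rw [h1, h2]

lemma part1 {m : ℕ} (G : Fin m → ℕ) (L₀ : ℕ)
    (hall : ∀ i, bhat β L₀ ∣ G i) (hsum : bhat β (L₀+1) ∣ ∑ i, G i)
    (hex : ∃ j, ¬ bhat β (L₀+1) ∣ G j) :
    ∃ X : Fin m → ℕ, msigma β (fun i => X i + G i) = msigma β X := by
  classical
  have hβpos : 0 < β 0 := by omega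
  have hb1 : bhat β 1 = β 0 := by rw [bhat_succ, bhat_zero, one_mul]
  have hdvd0 : β 0 ∣ ∑ i, G i := by
    rw [← hb1]
    exact dvd_trans (bhat_dvd hβ0 hβ (by omega)) hsum
  obtain ⟨q, hq⟩ := hdvd0
  cases L₀ with
  | zero =>
    obtain ⟨j, hj⟩ := hex
    rw [bhat_eq hβ0 hβ 0, pow_zero, mul_one] at hj
    set T := Finset.univ.filter (fun i => G i % β 0 ≠ 0) with hTdef
    have hjT : j ∈ T := by
      rw [hTdef]
      refine Finset.mem_filter.mpr ⟨Finset.mem_univ _, ?_⟩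
      intro h0
      exact hj (Nat.dvd_of_mod_eq_zero h0)
    have hT : 2 ≤ T.card := by
      by_contra hTc
      push_neg at hTc
      have hTsum : ∑ i ∈ T, G i % β 0 = ∑ i, G i % β 0 :=
        Finset.sum_filter_ne_zero Finset.univ
      have hub : ∑ i ∈ T, G i % β 0 ≤ T.card * (β 0 - 1) := by
        have := Finset.sum_le_card_nsmul T (fun i => G i % β 0) (β 0 - 1)
          (fun i _ => by
            show G i % β 0 ≤ β 0 - 1
            have := Nat.mod_lt (G i) hβpos; omega)
        simpa [smul_eq_mul] using this
      have hlb : 1 ≤ ∑ i ∈ T, G i % β 0 := by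
        refine le_trans ?_ (Finset.single_le_sum (f := fun i => G i % β 0)
          (fun i _ => Nat.zero_le _) hjT)
        show (1:ℕ) ≤ G j % β 0
        have := Nat.mod_lt (G j) hβpos
        have hj0 : G j % β 0 ≠ 0 := fun h0 => hj (Nat.dvd_of_mod_eq_zero h0)
        omega
      have hmod0 : (∑ i, G i % β 0) % β 0 = 0 := by
        rw [← Finset.sum_nat_mod, hq, Nat.mul_mod_right]
      have hlt : ∑ i, G i % β 0 < β 0 := by
        rw [← hTsum]
        have hub2 : T.card * (β 0 - 1) ≤ 1 * (β 0 - 1) :=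
          Nat.mul_le_mul_right (β 0 - 1) (by omega)
        rw [one_mul] at hub2
        omega
      rw [Nat.mod_eq_of_lt hlt] at hmod0
      omega
    obtain ⟨s, hs1, hsT, hspar, hsodd, _, _⟩ := pick_s (fun i => G i / β 0) T hT
    obtain ⟨u, hu⟩ := core (∑ i, (G i / β 0 + s i)) _ le_rfl (by
      rcases hsodd with hL | hR
      · exact Or.inl hL
      · exact Or.inr ⟨hspar, hR⟩)
    have hrdiv : ∀ i, ((if s i = 1 then β 0 - 1 else 0) + G i % β 0) / β 0 = s i := by
      intro i
      by_cases hsi : s i = 1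
      · rw [if_pos hsi, hsi]
        have haT : G i % β 0 ≠ 0 := by
          have := hsT i hsi
          rw [hTdef] at this
          exact (Finset.mem_filter.mp this).2
        have hmlt := Nat.mod_lt (G i) hβpos
        apply Nat.div_eq_of_lt_le <;> omega
      · have hs0 : s i = 0 := by have := hs1 i; omega
        rw [if_neg hsi, hs0, zero_add]
        exact Nat.div_eq_of_lt (Nat.mod_lt _ hβpos)
    have key1 : ∀ i, (β 0 * u i + (if s i = 1 then β 0 - 1 else 0)) / β 0 = u i := by
      intro i
      rw [Nat.mul_add_div hβpos]
      have h1 : (if s i = 1 then β 0 - 1 else 0) < β 0 := by split <;> omega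
      rw [Nat.div_eq_of_lt h1, add_zero]
    have key2 : ∀ i, ((β 0 * u i + (if s i = 1 then β 0 - 1 else 0)) + G i) / β 0
        = u i + (G i / β 0 + s i) := by
      intro i
      have hGi := Nat.div_add_mod (G i) (β 0)
      have hr2 : β 0 * (u i + G i / β 0) = β 0 * u i + β 0 * (G i / β 0) := by ring
      have heq : (β 0 * u i + (if s i = 1 then β 0 - 1 else 0)) + G i
          = β 0 * (u i + G i / β 0) + ((if s i = 1 then β 0 - 1 else 0) + G i % β 0) := by
        omega
      rw [heq, Nat.mul_add_div hβpos, hrdiv i]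
      ring
    refine ⟨fun i => β 0 * u i + (if s i = 1 then β 0 - 1 else 0),
      (sigma_iff hβ0 hβ _ G).mpr ⟨?_, ?_⟩⟩
    · rw [hq, Nat.add_mul_mod_self_left]
    · calc nsum (fun i => ((β 0 * u i + (if s i = 1 then β 0 - 1 else 0)) + G i) / β 0)
          = nsum (fun i => u i + (G i / β 0 + s i)) := by
            congr 1; funext i; exact key2 i
        _ = nsum u := hu
        _ = nsum (fun i => (β 0 * u i + (if s i = 1 then β 0 - 1 else 0)) / β 0) := by
            congr 1; funext i; exact (key1 i).symm
  | succ ν =>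
    have hbL : bhat β (ν+1) = β 0 * 2^ν := bhat_eq hβ0 hβ ν
    have hbL1 : bhat β (ν+2) = β 0 * 2^(ν+1) := bhat_eq hβ0 hβ (ν+1)
    have hGdef : ∀ i, G i = β 0 * 2^ν * (G i / (β 0 * 2^ν)) := fun i => by
      rw [Nat.mul_div_cancel' (hbL ▸ hall i)]
    have hsumk : ∑ i, G i = β 0 * 2^ν * ∑ i, G i / (β 0 * 2^ν) := by
      rw [Finset.mul_sum]
      exact Finset.sum_congr rfl (fun i _ => hGdef i)
    have hk2 : 2 ∣ ∑ i, G i / (β 0 * 2^ν) := by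
      obtain ⟨t, ht⟩ := hsum
      rw [hbL1, hsumk] at ht
      have hcan : β 0 * 2^(ν+1) * t = β 0 * 2^ν * (2 * t) := by ring
      rw [hcan] at ht
      exact ⟨t, Nat.eq_of_mul_eq_mul_left (show 0 < β 0 * 2^ν by positivity) ht⟩
    have hkodd : ∃ i, G i / (β 0 * 2^ν) % 2 = 1 := by
      obtain ⟨j, hj⟩ := hex
      refine ⟨j, ?_⟩
      rcases Nat.mod_two_eq_zero_or_one (G j / (β 0 * 2^ν)) with h2 | h2
      · exfalso
        apply hj
        rw [hbL1]
        obtain ⟨t, ht⟩ := Nat.dvd_of_mod_eq_zero h2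
        refine ⟨t, ?_⟩
        rw [hGdef j, ht]
        ring
      · exact h2
    obtain ⟨w, hw⟩ := core (∑ i, G i / (β 0 * 2^ν)) (fun i => G i / (β 0 * 2^ν))
      le_rfl (Or.inr ⟨hk2, hkodd⟩)
    have key1 : ∀ i, (β 0 * (2^ν * w i)) / β 0 = 2^ν * w i := fun i =>
      Nat.mul_div_cancel_left _ hβpos
    have key2 : ∀ i, ((β 0 * (2^ν * w i)) + G i) / β 0
        = 2^ν * (w i + G i / (β 0 * 2^ν)) := by
      intro i
      have he : (β 0 * (2^ν * w i)) + G i = β 0 * (2^ν * (w i + G i / (β 0 * 2^ν))) := by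
        conv_lhs => rw [hGdef i]
        ring
      rw [he, Nat.mul_div_cancel_left _ hβpos]
    refine ⟨fun i => β 0 * (2^ν * w i), (sigma_iff hβ0 hβ _ G).mpr ⟨?_, ?_⟩⟩
    · rw [hq, Nat.add_mul_mod_self_left]
    · calc nsum (fun i => ((β 0 * (2^ν * w i)) + G i) / β 0)
          = nsum (fun i => 2^ν * (w i + G i / (β 0 * 2^ν))) := by
            congr 1; funext i; exact key2 i
        _ = 2^ν * nsum (fun i => w i + G i / (β 0 * 2^ν)) := nsum_two_pow_mul _ ν
        _ = 2^ν * nsum w := by rw [hw]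
        _ = nsum (fun i => 2^ν * w i) := (nsum_two_pow_mul w ν).symm
        _ = nsum (fun i => (β 0 * (2^ν * w i)) / β 0) := by
            congr 1; funext i; exact (key1 i).symm

lemma part2 {m : ℕ} (C : Fin m → ℕ) (L₀ : ℕ)
    (hall : ∀ i, bhat β L₀ ∣ C i) (hnd : ¬ bhat β (L₀+1) ∣ ∑ i, C i) :
    ∀ X : Fin m → ℕ, msigma β (fun i => X i + C i) ≠ msigma β X := by
  intro X hEq
  have hβpos : 0 < β 0 := by omega
  obtain ⟨h1, h2⟩ := (sigma_iff hβ0 hβ X C).mp hEq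
  have hdvd0 : β 0 ∣ ∑ i, C i := by
    have hm : (∑ i, X i) ≡ (∑ i, X i + ∑ i, C i) [MOD β 0] := h1.symm
    have := (Nat.modEq_iff_dvd' (Nat.le_add_right _ _)).mp hm
    simpa using this
  cases L₀ with
  | zero =>
    apply hnd
    rw [bhat_eq hβ0 hβ 0, pow_zero, mul_one]
    exact hdvd0
  | succ ν =>
    have hbL : bhat β (ν+1) = β 0 * 2^ν := bhat_eq hβ0 hβ ν
    have hbL1 : bhat β (ν+2) = β 0 * 2^(ν+1) := bhat_eq hβ0 hβ (ν+1)
    have hCdef : ∀ i, C i = β 0 * (2^ν * (C i / (β 0 * 2^ν))) := fun i => by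
      rw [← mul_assoc, Nat.mul_div_cancel' (hbL ▸ hall i)]
    -- rewrite the nsum equation
    have hdivs : ∀ i, (X i + C i) / β 0 = X i / β 0 + 2^ν * (C i / (β 0 * 2^ν)) := by
      intro i
      conv_lhs => rw [hCdef i]
      rw [Nat.add_mul_div_left _ _ hβpos]
    rw [show (fun i => (X i + C i) / β 0)
        = fun i => X i / β 0 + 2^ν * (C i / (β 0 * 2^ν)) from funext hdivs] at h2
    -- extract bit ν
    have hbit := congrArg (fun z => z / 2^ν % 2) h2
    rw [nsum_bit, nsum_bit] at hbit
    have hterm : ∀ i, (X i / β 0 + 2^ν * (C i / (β 0 * 2^ν))) / 2^ν % 2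
        = (X i / β 0 / 2^ν + C i / (β 0 * 2^ν)) % 2 := by
      intro i
      rw [Nat.add_mul_div_left _ _ (Nat.two_pow_pos ν)]
    rw [Finset.sum_congr rfl (fun i _ => hterm i)] at hbit
    have hL : (∑ i, (X i / β 0 / 2^ν + C i / (β 0 * 2^ν)) % 2) % 2
        = (∑ i, X i / β 0 / 2^ν + ∑ i, C i / (β 0 * 2^ν)) % 2 := by
      rw [← Finset.sum_nat_mod, Finset.sum_add_distrib]
    have hR : (∑ i, X i / β 0 / 2^ν % 2) % 2 = (∑ i, X i / β 0 / 2^ν) % 2 := by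
      rw [← Finset.sum_nat_mod]
    rw [hL, hR] at hbit
    have hk2 : 2 ∣ ∑ i, C i / (β 0 * 2^ν) := by omega
    apply hnd
    obtain ⟨t, ht⟩ := hk2
    have hsumC : ∑ i, C i = β 0 * 2^ν * ∑ i, C i / (β 0 * 2^ν) := by
      rw [Finset.mul_sum]
      refine Finset.sum_congr rfl (fun i _ => ?_)
      rw [mul_assoc]
      exact hCdef i
    rw [hbL1, hsumC, ht]
    exact ⟨t, by ring⟩

end AuxSG

/-- For β = (β₀, 2, 2, …): every nonzero G with ord_β(Σ g^i) > min_i ord_β(g^i)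
fails to change σ_β somewhere, and consequently the maximum Sprague-Grundy
system equals the canonical system 𝒞_β. -/
theorem stmt13 (β : ℕ → ℕ) (hβ0 : 2 ≤ β 0) (hβ : ∀ L, 1 ≤ L → β L = 2)
    {m : ℕ} (hm : 1 ≤ m) :
    (∀ G : Fin m → ℕ, G ≠ 0 → (⨅ i, mord β (G i)) < mord β (∑ i, G i) →
      ∃ X : Fin m → ℕ, msigma β (fun i => X i + G i) = msigma β X) ∧
    {C : Fin m → ℕ | C ≠ 0 ∧
        ∀ X : Fin m → ℕ, msigma β (fun i => X i + C i) ≠ msigma β X} =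
      {C : Fin m → ℕ | C ≠ 0 ∧ mord β (∑ i, C i) = ⨅ i, mord β (C i)} := by
  have hpart1 : ∀ G : Fin m → ℕ, (⨅ i, mord β (G i)) < mord β (∑ i, G i) →
      ∃ X : Fin m → ℕ, msigma β (fun i => X i + G i) = msigma β X := by
    intro G hlt
    have htop : (⨅ i, mord β (G i)) ≠ ⊤ := ne_top_of_lt hlt
    obtain ⟨L₀, hL₀'⟩ := WithTop.ne_top_iff_exists.mp htop
    have hL₀ : (L₀ : ℕ∞) = ⨅ i, mord β (G i) := by exact_mod_cast hL₀'
    have hall : ∀ i, bhat β L₀ ∣ G i := fun i =>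
      (mord_ge_iff hβ0 hβ (G i) L₀).mp (hL₀.le.trans (iInf_le _ i))
    have hsum : bhat β (L₀+1) ∣ ∑ i, G i := by
      apply (mord_ge_iff hβ0 hβ _ _).mp
      have hlt' : ((L₀ : ℕ∞)) < mord β (∑ i, G i) := by rw [hL₀]; exact hlt
      have := (ENat.add_one_le_iff (n := mord β (∑ i, G i))
        (by exact WithTop.coe_ne_top)).mpr hlt'
      exact_mod_cast this
    have hex : ∃ j, ¬ bhat β (L₀+1) ∣ G j := by
      by_contra hno
      push_neg at hno
      have hge : ((L₀+1 : ℕ) : ℕ∞) ≤ ⨅ i, mord β (G i) :=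
        le_iInf_iff.mpr (fun i => (mord_ge_iff hβ0 hβ (G i) (L₀+1)).mpr (hno i))
      rw [← hL₀] at hge
      exact absurd (Nat.cast_le.mp hge) (by omega)
    exact part1 hβ0 hβ G L₀ hall hsum hex
  refine ⟨fun G _ hlt => hpart1 G hlt, ?_⟩
  ext C
  simp only [Set.mem_setOf_eq]
  constructor
  · rintro ⟨hC0, hforall⟩
    refine ⟨hC0, ?_⟩
    have hle : (⨅ i, mord β (C i)) ≤ mord β (∑ i, C i) := by
      by_cases htop : (⨅ i, mord β (C i)) = ⊤
      · exfalso
        obtain ⟨j, hj⟩ := Function.ne_iff.mp hC0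
        have hj0 : mord β (C j) = ⊤ := iInf_eq_top.mp htop j
        unfold mord at hj0
        rw [if_neg (by simpa using hj)] at hj0
        exact WithTop.coe_ne_top hj0
      · obtain ⟨L₀, hL₀'⟩ := WithTop.ne_top_iff_exists.mp htop
        have hL₀ : (L₀ : ℕ∞) = ⨅ i, mord β (C i) := by exact_mod_cast hL₀'
        rw [← hL₀]
        apply (mord_ge_iff hβ0 hβ _ _).mpr
        exact Finset.dvd_sum (fun i _ =>
          (mord_ge_iff hβ0 hβ (C i) L₀).mp (hL₀.le.trans (iInf_le _ i)))
    have hnlt : ¬ ((⨅ i, mord β (C i)) < mord β (∑ i, C i)) := by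
      intro hlt
      obtain ⟨X, hX⟩ := hpart1 C hlt
      exact hforall X hX
    exact le_antisymm (not_lt.mp hnlt) hle
  · rintro ⟨hC0, heq⟩
    refine ⟨hC0, ?_⟩
    have hsumne : ∑ i, C i ≠ 0 := by
      intro h0
      apply hC0
      funext i
      exact (Finset.sum_eq_zero_iff.mp h0) i (Finset.mem_univ i)
    have htop : mord β (∑ i, C i) ≠ ⊤ := by
      unfold mord
      rw [if_neg hsumne]
      exact WithTop.coe_ne_top
    obtain ⟨L₀, hL₀'⟩ := WithTop.ne_top_iff_exists.mp htop
    have hL₀ : (L₀ : ℕ∞) = mord β (∑ i, C i) := by exact_mod_cast hL₀'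
    have hall : ∀ i, bhat β L₀ ∣ C i := by
      intro i
      apply (mord_ge_iff hβ0 hβ (C i) L₀).mp
      rw [hL₀, heq]
      exact iInf_le _ i
    have hnd : ¬ bhat β (L₀+1) ∣ ∑ i, C i := by
      intro hd
      have := (mord_ge_iff hβ0 hβ (∑ i, C i) (L₀+1)).mpr hd
      rw [← hL₀] at this
      exact absurd (Nat.cast_le.mp this) (by omega)
    exact part2 hβ0 hβ C L₀ hall hnd
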